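/- Let f : [0,1] → ℝ be a function such that (x, f(x)) ∈ C_i for all x ∈ [0,1], where C_i is the i-th stage of the fractal construction (a union of 4^i squares of side 4^{−i} arranged so that any function whose graph lies in C_i must traverse vertical gaps of total length at least i). Then the total variation of f on [0,1] is at least i. Consequently, any function f with (x, f(x)) ∈ ⋂_i C_i for all x ∈ [0,1] has infinite total variation. -/

import Mathlib

open Set

/-- Vertical offsets (in quarter units) of the four sub-squares, arranged so that
consecutive squares over adjacent x-intervals differ in height. -/
noncomputable def h4 : Fin 4 → ℝ := ![0, 3, 0, 3]

/-- The contraction mapping the unit square onto the `k`-th sub-square. -/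
noncomputable def Tmap (k : Fin 4) (z : ℝ × ℝ) : ℝ × ℝ :=
  ((z.1 + (k : ℕ)) / 4, (z.2 + h4 k) / 4)

/-- The stages of the fractal construction: `C 0` is the unit square and each square
of side `4⁻ⁱ` is replaced by four sub-squares of side `4⁻ⁱ⁻¹`. -/
noncomputable def Cstage : ℕ → Set (ℝ × ℝ)
  | 0 => Icc (0:ℝ) 1 ×ˢ Icc (0:ℝ) 1
  | (i + 1) => ⋃ k : Fin 4, Tmap k '' Cstage i

open NNReal ENNReal

lemma h4_bounds (k : Fin 4) : h4 k = 0 ∨ h4 k = 3 := by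
  fin_cases k <;> norm_num [h4]

lemma Cstage_sub : ∀ i, Cstage i ⊆ Icc (0:ℝ) 1 ×ˢ Icc (0:ℝ) 1 := by
  intro i
  induction i with
  | zero => rw [Cstage]
  | succ i ih =>
    rintro ⟨a, b⟩ hmem
    rw [Cstage] at hmem
    obtain ⟨k, w, hw, heq⟩ := mem_iUnion.1 hmem
    obtain ⟨p, q⟩ := w
    have hpq := ih hw
    simp only [Tmap, Prod.mk.injEq] at heq
    have hk : ((k:ℕ):ℝ) ≤ 3 := by exact_mod_cast Fin.is_le k
    have hk0 : (0:ℝ) ≤ ((k:ℕ):ℝ) := Nat.cast_nonneg _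
    obtain ⟨⟨hp0, hp1⟩, ⟨hq0, hq1⟩⟩ := hpq
    rcases h4_bounds k with h | h <;>
      exact ⟨⟨by rw [← heq.1]; linarith, by rw [← heq.1]; linarith⟩,
             ⟨by rw [← heq.2]; rw [h]; linarith, by rw [← heq.2]; rw [h]; linarith⟩⟩

/-- distance from y to the interval [0,1] -/
noncomputable def dI (y : ℝ) : ℝ := max (max (-y) (y - 1)) 0

lemma dI_nonneg (y : ℝ) : 0 ≤ dI y := le_max_right _ _
lemma neg_le_dI (y : ℝ) : -y ≤ dI y := le_max_of_le_left (le_max_left _ _)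
lemma sub_one_le_dI (y : ℝ) : y - 1 ≤ dI y := le_max_of_le_left (le_max_right _ _)

lemma dI_le {p : ℝ} (y : ℝ) (hp : p ∈ Icc (0:ℝ) 1) : dI y ≤ |y - p| := by
  have h1 := le_abs_self (y - p)
  have h2 := neg_le_abs (y - p)
  show max (max (-y) (y - 1)) 0 ≤ |y - p|
  exact max_le (max_le (by linarith [hp.1]) (by linarith [hp.2])) (abs_nonneg _)

lemma dI_four (y : ℝ) : 4 * dI y ≤ dI (4 * y) := by
  have h1 := neg_le_dI (4 * y)
  have h2 := sub_one_le_dI (4 * y)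
  have h3 := dI_nonneg (4 * y)
  have h : dI y ≤ dI (4 * y) / 4 := by
    show max (max (-y) (y - 1)) 0 ≤ _
    exact max_le (max_le (by linarith) (by linarith)) (by linarith)
  linarith

lemma dI_four' (y : ℝ) : 4 * dI y ≤ dI (4 * y - 3) := by
  have h1 := neg_le_dI (4 * y - 3)
  have h2 := sub_one_le_dI (4 * y - 3)
  have h3 := dI_nonneg (4 * y - 3)
  have h : dI y ≤ dI (4 * y - 3) / 4 := by
    show max (max (-y) (y - 1)) 0 ≤ _
    exact max_le (max_le (by linarith) (by linarith)) (by linarith)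
  linarith

lemma dI_pair (z : ℝ) : 2 ≤ dI z + dI (z - 3) := by
  rcases le_total z 1 with h | h
  · linarith [neg_le_dI (z - 3), dI_nonneg z]
  · rcases le_total z 3 with h' | h'
    · linarith [sub_one_le_dI z, neg_le_dI (z - 3)]
    · linarith [sub_one_le_dI z, dI_nonneg (z - 3)]

noncomputable def gmap (f : ℝ → ℝ) (k : Fin 4) (z : ℝ) : ℝ := 4 * f ((z + (k:ℕ)) / 4) - h4 k

lemma graph_in {i : ℕ} {f : ℝ → ℝ} (hf : ∀ x ∈ Ioo (0:ℝ) 1, (x, f x) ∈ Cstage (i+1))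
    (k : Fin 4) : ∀ z ∈ Ioo (0:ℝ) 1, (z, gmap f k z) ∈ Cstage i := by
  intro z hz
  have hk : ((k:ℕ):ℝ) ≤ 3 := by exact_mod_cast Fin.is_le k
  have hk0 : (0:ℝ) ≤ ((k:ℕ):ℝ) := Nat.cast_nonneg _
  have hx : (z + (k:ℕ)) / 4 ∈ Ioo (0:ℝ) 1 := ⟨by linarith [hz.1], by linarith [hz.2]⟩
  have hmem := hf _ hx
  rw [Cstage] at hmem
  obtain ⟨j, w, hw, heq⟩ := mem_iUnion.1 hmem
  obtain ⟨p, q⟩ := w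
  have hpq := Cstage_sub i hw
  simp only [Tmap, Prod.mk.injEq] at heq
  have hj : ((j:ℕ):ℝ) ≤ 3 := by exact_mod_cast Fin.is_le j
  have hj0 : (0:ℝ) ≤ ((j:ℕ):ℝ) := Nat.cast_nonneg _
  have hpz : p + ((j:ℕ):ℝ) = z + ((k:ℕ):ℝ) := by
    have := heq.1; linarith
  have hjk : j = k := by
    by_contra hne
    have hne' : (j:ℕ) ≠ (k:ℕ) := fun h => hne (Fin.ext h)
    rcases hne'.lt_or_gt with h | h
    · have h' : ((j:ℕ):ℝ) + 1 ≤ ((k:ℕ):ℝ) := by exact_mod_cast h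
      linarith [hpq.1.2, hz.1]
    · have h' : ((k:ℕ):ℝ) + 1 ≤ ((j:ℕ):ℝ) := by exact_mod_cast h
      linarith [hpq.1.1, hz.2]
  rw [hjk] at heq hpz
  have hpz' : p = z := by linarith
  have hqz : q = gmap f k z := by
    have h2 := heq.2
    simp only [gmap]
    linarith
  subst hpz'
  rw [← hqz]
  exact hw

lemma scale {f : ℝ → ℝ} (k : Fin 4) :
    eVariationOn (gmap f k) (Icc (0:ℝ) 1) ≤
      4 * eVariationOn f (Icc (((k:ℕ):ℝ)/4) ((((k:ℕ):ℝ)+1)/4)) := by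
  have hL : LipschitzOnWith 4 (fun y : ℝ => 4 * y - h4 k) univ := by
    apply LipschitzWith.lipschitzOnWith
    apply LipschitzWith.of_dist_le_mul
    intro x y
    have : (4 * x - h4 k) - (4 * y - h4 k) = 4 * (x - y) := by ring
    rw [Real.dist_eq, Real.dist_eq, this, abs_mul]
    norm_num
  have hφ : MonotoneOn (fun z : ℝ => (z + (k:ℕ)) / 4) (Icc (0:ℝ) 1) := by
    intro a _ b _ hab
    simp only
    linarith
  have hmaps : MapsTo (fun z : ℝ => (z + (k:ℕ)) / 4) (Icc (0:ℝ) 1)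
      (Icc (((k:ℕ):ℝ)/4) ((((k:ℕ):ℝ)+1)/4)) := by
    intro a ha
    exact ⟨by simp only; linarith [ha.1], by simp only; linarith [ha.2]⟩
  calc eVariationOn (gmap f k) (Icc (0:ℝ) 1)
      = eVariationOn ((fun y : ℝ => 4 * y - h4 k) ∘ (f ∘ (fun z : ℝ => (z + (k:ℕ)) / 4)))
          (Icc (0:ℝ) 1) := rfl
    _ ≤ ((4:ℝ≥0):ℝ≥0∞) * eVariationOn (f ∘ (fun z : ℝ => (z + (k:ℕ)) / 4)) (Icc (0:ℝ) 1) :=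
        hL.comp_eVariationOn_le (mapsTo_univ _ _)
    _ ≤ ((4:ℝ≥0):ℝ≥0∞) * eVariationOn f (Icc (((k:ℕ):ℝ)/4) ((((k:ℕ):ℝ)+1)/4)) := by
        gcongr
        exact eVariationOn.comp_le_of_monotoneOn f _ hφ hmaps
    _ = 4 * eVariationOn f (Icc (((k:ℕ):ℝ)/4) ((((k:ℕ):ℝ)+1)/4)) := by norm_cast

lemma key : ∀ i : ℕ, ∀ f : ℝ → ℝ, (∀ x ∈ Ioo (0:ℝ) 1, (x, f x) ∈ Cstage i) →
    (i : ℝ≥0∞) + ENNReal.ofReal (dI (f 0)) + ENNReal.ofReal (dI (f 1)) ≤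
      eVariationOn f (Icc (0:ℝ) 1) := by
  intro i
  induction i with
  | zero =>
    intro f hf
    have hhalf : f (1/2) ∈ Icc (0:ℝ) 1 := by
      have h := hf (1/2) (by norm_num)
      rw [Cstage] at h
      exact h.2
    have E := eVariationOn.Icc_add_Icc f (s := univ)
      (by norm_num : (0:ℝ) ≤ 1/2) (by norm_num : (1/2:ℝ) ≤ 1) (mem_univ _)
    simp only [univ_inter] at E
    have h0 : ENNReal.ofReal (dI (f 0)) ≤ eVariationOn f (Icc (0:ℝ) (1/2)) := by
      refine le_trans ?_ (eVariationOn.edist_le f (x := 0) (y := 1/2) (by norm_num) (by norm_num))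
      rw [edist_dist, Real.dist_eq]
      exact ENNReal.ofReal_le_ofReal (dI_le _ hhalf)
    have h1 : ENNReal.ofReal (dI (f 1)) ≤ eVariationOn f (Icc (1/2:ℝ) 1) := by
      refine le_trans ?_ (eVariationOn.edist_le f (x := 1) (y := 1/2) (by norm_num) (by norm_num))
      rw [edist_dist, Real.dist_eq]
      exact ENNReal.ofReal_le_ofReal (dI_le _ hhalf)
    calc ((0:ℕ) : ℝ≥0∞) + ENNReal.ofReal (dI (f 0)) + ENNReal.ofReal (dI (f 1))
        = ENNReal.ofReal (dI (f 0)) + ENNReal.ofReal (dI (f 1)) := by simp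
      _ ≤ eVariationOn f (Icc (0:ℝ) (1/2)) + eVariationOn f (Icc (1/2:ℝ) 1) := add_le_add h0 h1
      _ = eVariationOn f (Icc (0:ℝ) 1) := E
  | succ i ih =>
    intro f hf
    have hq : ∀ k : Fin 4,
        ENNReal.ofReal ((i:ℝ) + dI (gmap f k 0) + dI (gmap f k 1)) ≤
          4 * eVariationOn f (Icc (((k:ℕ):ℝ)/4) ((((k:ℕ):ℝ)+1)/4)) := by
      intro k
      have h1 := ih (gmap f k) (graph_in hf k)
      refine le_trans (le_of_eq ?_) (h1.trans (scale k))
      rw [ENNReal.ofReal_add (add_nonneg (Nat.cast_nonneg i) (dI_nonneg _)) (dI_nonneg _),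
          ENNReal.ofReal_add (Nat.cast_nonneg i) (dI_nonneg _), ENNReal.ofReal_natCast]
    have c2 : ((2:Fin 4):ℕ) = 2 := rfl
    have c3 : ((3:Fin 4):ℕ) = 3 := rfl
    -- endpoint values of the rescaled functions
    have g00 : gmap f 0 0 = 4 * f 0 := by norm_num [gmap, h4]
    have g01 : gmap f 0 1 = 4 * f (1/4) := by norm_num [gmap, h4]
    have g10 : gmap f 1 0 = 4 * f (1/4) - 3 := by norm_num [gmap, h4]
    have g11 : gmap f 1 1 = 4 * f (1/2) - 3 := by norm_num [gmap, h4]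
    have g20 : gmap f 2 0 = 4 * f (1/2) := by norm_num [gmap, h4, c2]; rfl
    have g21 : gmap f 2 1 = 4 * f (3/4) := by norm_num [gmap, h4, c2]; rfl
    have g30 : gmap f 3 0 = 4 * f (3/4) - 3 := by norm_num [gmap, h4, c3]; rfl
    have g31 : gmap f 3 1 = 4 * f 1 - 3 := by norm_num [gmap, h4, c3]; rfl
    have q0 : ENNReal.ofReal ((i:ℝ) + dI (4 * f 0) + dI (4 * f (1/4))) ≤
        4 * eVariationOn f (Icc (0:ℝ) (1/4)) := by
      have h := hq 0
      rwa [g00, g01, show Icc ((((0:Fin 4):ℕ):ℝ)/4) ((((((0:Fin 4):ℕ):ℝ))+1)/4) = Icc (0:ℝ) (1/4)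
        from by norm_num] at h
    have q1 : ENNReal.ofReal ((i:ℝ) + dI (4 * f (1/4) - 3) + dI (4 * f (1/2) - 3)) ≤
        4 * eVariationOn f (Icc (1/4:ℝ) (1/2)) := by
      have h := hq 1
      rwa [g10, g11, show Icc ((((1:Fin 4):ℕ):ℝ)/4) ((((((1:Fin 4):ℕ):ℝ))+1)/4) = Icc (1/4:ℝ) (1/2)
        from by norm_num] at h
    have q2 : ENNReal.ofReal ((i:ℝ) + dI (4 * f (1/2)) + dI (4 * f (3/4))) ≤
        4 * eVariationOn f (Icc (1/2:ℝ) (3/4)) := by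
      have h := hq 2
      rwa [g20, g21, show Icc ((((2:Fin 4):ℕ):ℝ)/4) ((((((2:Fin 4):ℕ):ℝ))+1)/4) = Icc (1/2:ℝ) (3/4)
        from by norm_num [c2]] at h
    have q3 : ENNReal.ofReal ((i:ℝ) + dI (4 * f (3/4) - 3) + dI (4 * f 1 - 3)) ≤
        4 * eVariationOn f (Icc (3/4:ℝ) 1) := by
      have h := hq 3
      rwa [g30, g31, show Icc ((((3:Fin 4):ℕ):ℝ)/4) ((((((3:Fin 4):ℕ):ℝ))+1)/4) = Icc (3/4:ℝ) 1
        from by norm_num [c3]] at h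
    -- decompose the variation on [0,1] into the four quarters
    have E1 := eVariationOn.Icc_add_Icc f (s := univ)
      (by norm_num : (0:ℝ) ≤ 3/4) (by norm_num : (3/4:ℝ) ≤ 1) (mem_univ _)
    have E2 := eVariationOn.Icc_add_Icc f (s := univ)
      (by norm_num : (0:ℝ) ≤ 1/2) (by norm_num : (1/2:ℝ) ≤ 3/4) (mem_univ _)
    have E3 := eVariationOn.Icc_add_Icc f (s := univ)
      (by norm_num : (0:ℝ) ≤ 1/4) (by norm_num : (1/4:ℝ) ≤ 1/2) (mem_univ _)
    simp only [univ_inter] at E1 E2 E3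
    rw [← E1, ← E2, ← E3]
    -- divide the per-quarter bounds by 4
    have step : ∀ {x : ℝ} {V : ℝ≥0∞}, ENNReal.ofReal x ≤ 4 * V →
        ENNReal.ofReal (x/4) ≤ V := by
      intro x V h
      rw [ENNReal.ofReal_div_of_pos (by norm_num), ENNReal.ofReal_ofNat]
      exact ENNReal.div_le_of_le_mul (by rwa [mul_comm] at h)
    have hi : (0:ℝ) ≤ (i:ℝ) := Nat.cast_nonneg i
    have n0 : (0:ℝ) ≤ ((i:ℝ) + dI (4 * f 0) + dI (4 * f (1/4)))/4 := by
      have := dI_nonneg (4 * f 0); have := dI_nonneg (4 * f (1/4)); linarith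
    have n1 : (0:ℝ) ≤ ((i:ℝ) + dI (4 * f (1/4) - 3) + dI (4 * f (1/2) - 3))/4 := by
      have := dI_nonneg (4 * f (1/4) - 3); have := dI_nonneg (4 * f (1/2) - 3); linarith
    have n2 : (0:ℝ) ≤ ((i:ℝ) + dI (4 * f (1/2)) + dI (4 * f (3/4)))/4 := by
      have := dI_nonneg (4 * f (1/2)); have := dI_nonneg (4 * f (3/4)); linarith
    have n3 : (0:ℝ) ≤ ((i:ℝ) + dI (4 * f (3/4) - 3) + dI (4 * f 1 - 3))/4 := by
      have := dI_nonneg (4 * f (3/4) - 3); have := dI_nonneg (4 * f 1 - 3); linarith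
    calc ((i+1:ℕ) : ℝ≥0∞) + ENNReal.ofReal (dI (f 0)) + ENNReal.ofReal (dI (f 1))
        = ENNReal.ofReal (((i:ℝ) + 1) + dI (f 0) + dI (f 1)) := by
          rw [ENNReal.ofReal_add (by linarith [dI_nonneg (f 0)]) (dI_nonneg (f 1)),
              ENNReal.ofReal_add (by linarith) (dI_nonneg (f 0)),
              show ((i:ℝ) + 1) = ((i+1:ℕ):ℝ) by push_cast; ring, ENNReal.ofReal_natCast]
      _ ≤ ENNReal.ofReal (((i:ℝ) + dI (4 * f 0) + dI (4 * f (1/4)))/4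
            + ((i:ℝ) + dI (4 * f (1/4) - 3) + dI (4 * f (1/2) - 3))/4
            + ((i:ℝ) + dI (4 * f (1/2)) + dI (4 * f (3/4)))/4
            + ((i:ℝ) + dI (4 * f (3/4) - 3) + dI (4 * f 1 - 3))/4) := by
          apply ENNReal.ofReal_le_ofReal
          have p1 := dI_pair (4 * f (1/4))
          have p2 := dI_pair (4 * f (1/2))
          have p3 := dI_pair (4 * f (3/4))
          have e0 := dI_four (f 0)
          have e1 := dI_four' (f 1)
          linarith
      _ = ENNReal.ofReal (((i:ℝ) + dI (4 * f 0) + dI (4 * f (1/4)))/4)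
            + ENNReal.ofReal (((i:ℝ) + dI (4 * f (1/4) - 3) + dI (4 * f (1/2) - 3))/4)
            + ENNReal.ofReal (((i:ℝ) + dI (4 * f (1/2)) + dI (4 * f (3/4)))/4)
            + ENNReal.ofReal (((i:ℝ) + dI (4 * f (3/4) - 3) + dI (4 * f 1 - 3))/4) := by
          rw [ENNReal.ofReal_add (by linarith) n3, ENNReal.ofReal_add (by linarith) n2,
              ENNReal.ofReal_add n0 n1]
      _ ≤ eVariationOn f (Icc (0:ℝ) (1/4)) + eVariationOn f (Icc (1/4:ℝ) (1/2))
            + eVariationOn f (Icc (1/2:ℝ) (3/4)) + eVariationOn f (Icc (3/4:ℝ) 1) :=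
          add_le_add (add_le_add (add_le_add (step q0) (step q1)) (step q2)) (step q3)

theorem stmt16 :
    (∀ i : ℕ, ∀ f : ℝ → ℝ, (∀ x ∈ Icc (0:ℝ) 1, (x, f x) ∈ Cstage i) →
      (i : ENNReal) ≤ eVariationOn f (Icc (0:ℝ) 1)) ∧
    (∀ f : ℝ → ℝ, (∀ x ∈ Icc (0:ℝ) 1, (x, f x) ∈ ⋂ i, Cstage i) →
      eVariationOn f (Icc (0:ℝ) 1) = ⊤) := by
  have part1 : ∀ i : ℕ, ∀ f : ℝ → ℝ, (∀ x ∈ Icc (0:ℝ) 1, (x, f x) ∈ Cstage i) →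
      (i : ENNReal) ≤ eVariationOn f (Icc (0:ℝ) 1) := by
    intro i f hf
    have h := key i f (fun x hx => hf x ⟨le_of_lt hx.1, le_of_lt hx.2⟩)
    exact le_trans ((self_le_add_right _ _).trans (self_le_add_right _ _)) h
  refine ⟨part1, fun f hf => ?_⟩
  have h : ∀ i : ℕ, (i : ENNReal) ≤ eVariationOn f (Icc (0:ℝ) 1) :=
    fun i => part1 i f (fun x hx => (mem_iInter.1 (hf x hx)) i)
  exact eq_top_iff.2 (by rw [← ENNReal.iSup_natCast]; exact iSup_le h)
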